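/- arXiv:2103.09552 — 4 statements merged into one kernel-verified Lean document; each statement's English description precedes it below -/
import Mathlib

section
/- Let $V$ be a finite set and $f : V \to \mathbb{R}^\times$ a non-vanishing function. The linear map $\varphi : \Lambda_n(V) \to \Lambda_n(V)$ sending an elementary $n$-path $v_0 v_1 \cdots v_n$ to $\frac{1}{f(v_0) f(v_1) \cdots f(v_n)} v_0 v_1 \cdots v_n$ satisfies $\partial_n^f \circ \varphi = \varphi \circ \partial_n$ for all $n$, where $\partial_n^f (v_0 \cdots v_n) = \sum_{i=0}^n (-1)^i f(v_i)\, v_0 \cdots \widehat{v_i} \cdots v_n$ and $\partial_n$ is the unweighted boundary. -/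
open LinearMap

/-- The `f`-weighted boundary operator `∂ₙ₊₁^f` on paths,
`∂^f(v₀…vₙ₊₁) = ∑ᵢ (-1)ⁱ f(vᵢ) v₀…v̂ᵢ…vₙ₊₁`, on the space `Λₙ₊₁(V)` of
`(n+1)`-paths (free real vector space on sequences of `n+2` vertices). -/
noncomputable def pathBoundary (V : Type) (f : V → ℝ) (n : ℕ) :
    ((Fin (n + 2) → V) →₀ ℝ) →ₗ[ℝ] ((Fin (n + 1) → V) →₀ ℝ) :=
  Finsupp.lsum ℝ fun p => LinearMap.toSpanSingleton ℝ _
    (∑ i : Fin (n + 2), ((-1 : ℝ) ^ (i : ℕ) * f (p i)) •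
      Finsupp.single (p ∘ i.succAbove) 1)

/-- The rescaling map `φ(v₀…vₙ) = (f(v₀)⋯f(vₙ))⁻¹ v₀…vₙ` on `Λₙ(V)`. -/
noncomputable def pathRescale (V : Type) (f : V → ℝ) (n : ℕ) :
    ((Fin (n + 1) → V) →₀ ℝ) →ₗ[ℝ] ((Fin (n + 1) → V) →₀ ℝ) :=
  Finsupp.lsum ℝ fun p => LinearMap.toSpanSingleton ℝ _
    ((∏ i, f (p i))⁻¹ • Finsupp.single p 1)

/-- the rescaling map intertwines the unweighted boundary with the
`f`-weighted boundary: `∂ₙ^f ∘ φ = φ ∘ ∂ₙ`. -/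
theorem stmt8 (V : Type) [Fintype V] (f : V → ℝ) (hf : ∀ v, f v ≠ 0) :
    ∀ n : ℕ, (pathBoundary V f n).comp (pathRescale V f (n + 1))
      = (pathRescale V f n).comp (pathBoundary V (fun _ => 1) n) := by
  intro n
  apply Finsupp.lhom_ext'
  intro p
  apply LinearMap.ext_ring
  simp only [pathBoundary, pathRescale, LinearMap.comp_apply, Finsupp.lsingle_apply,
    Finsupp.lsum_single, LinearMap.toSpanSingleton_apply_one, LinearMap.toSpanSingleton_apply,
    one_smul, map_smul, map_sum, smul_smul, mul_one, Finsupp.smul_sum, Finsupp.smul_single]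
  rw [Finset.smul_sum]
  refine Finset.sum_congr rfl fun i _ => ?_
  rw [Finsupp.smul_single]
  congr 1
  have h := Fin.prod_univ_succAbove (fun j => f (p j)) i
  simp only [smul_eq_mul, mul_one, Function.comp, h]
  rw [mul_inv, mul_comm ((f (p i))⁻¹) ((∏ i_1 : Fin (n + 1), f (p (i.succAbove i_1)))⁻¹),
    mul_assoc, mul_comm ((-1:ℝ) ^ (i:ℕ)) (f (p i)), ← mul_assoc ((f (p i))⁻¹),
    inv_mul_cancel₀ (hf _), one_mul, mul_comm]
end

section
/- Let $V$ be a finite set and $f : V \to \mathbb{R}^\times$ non-vanishing. The map $\varphi(v_0 \cdots v_n) = \frac{1}{f(v_0) \cdots f(v_n)} v_0 \cdots v_n$ on $\Lambda_n(V)$ maps the subspace $I_n(V)$ of irregular $n$-paths isomorphically onto itself, and hence induces a chain isomorphism of the quotient complexes $\mathcal{R}_*(V) = \Lambda_*(V)/I_*(V)$ intertwining the unweighted regular boundary $\partial_n$ with the $f$-weighted regular boundary $\partial_n^f$. -/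
open LinearMap Submodule

/-- The subspace `Iₙ(V) ⊆ Λₙ(V)` spanned by irregular elementary paths
(those with two equal consecutive vertices). -/
noncomputable def Irr (V : Type) (n : ℕ) :
    Submodule ℝ ((Fin (n + 1) → V) →₀ ℝ) :=
  Submodule.span ℝ {x | ∃ p : Fin (n + 1) → V,
    (∃ i : Fin n, p i.castSucc = p i.succ) ∧ x = Finsupp.single p 1}

lemma rescale_single (V : Type) (f : V → ℝ) (n : ℕ) (p : Fin (n+1) → V) (b : ℝ) :
    pathRescale V f n (Finsupp.single p b) =
      (b * (∏ i, f (p i))⁻¹) • Finsupp.single p 1 := by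
  simp [pathRescale, mul_smul]

lemma boundary_single (V : Type) (f : V → ℝ) (n : ℕ) (p : Fin (n+2) → V) (b : ℝ) :
    pathBoundary V f n (Finsupp.single p b) =
      b • ∑ i : Fin (n + 2), ((-1 : ℝ) ^ (i : ℕ) * f (p i)) •
        Finsupp.single (p ∘ i.succAbove) (1 : ℝ) := by
  simp [pathBoundary]

/-- Any rescaling preserves `Irr`. -/
lemma rescale_irr (V : Type) (f : V → ℝ) (n : ℕ) :
    Irr V n ≤ (Irr V n).comap (pathRescale V f n) := by
  rw [Irr, span_le]
  rintro x ⟨p, hp, rfl⟩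
  simp only [SetLike.mem_coe, mem_comap, rescale_single]
  exact smul_mem _ _ (subset_span ⟨p, hp, rfl⟩)

lemma rescale_inv (V : Type) (f g : V → ℝ) (h : ∀ v, (f v)⁻¹ * (g v)⁻¹ = 1) (n : ℕ) :
    (pathRescale V g n).comp (pathRescale V f n) = LinearMap.id := by
  apply Finsupp.lhom_ext
  intro p b
  rw [LinearMap.comp_apply, rescale_single, map_smul, rescale_single, smul_smul,
    LinearMap.id_apply]
  have hcd : (∏ i, f (p i))⁻¹ * (∏ i, g (p i))⁻¹ = 1 := by
    rw [← Finset.prod_inv_distrib, ← Finset.prod_inv_distrib, ← Finset.prod_mul_distrib]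
    simp [h]
  rw [one_mul, mul_assoc, hcd, mul_one, Finsupp.smul_single, smul_eq_mul, mul_one]

lemma chain_comm (V : Type) (f : V → ℝ) (hf : ∀ v, f v ≠ 0) (n : ℕ) :
    (pathRescale V f n).comp (pathBoundary V (fun _ => 1) n)
      = (pathBoundary V f n).comp (pathRescale V f (n+1)) := by
  apply Finsupp.lhom_ext
  intro p b
  simp only [LinearMap.comp_apply, boundary_single, rescale_single, map_smul, map_sum,
    rescale_single, Finset.smul_sum, smul_smul]
  congr 1
  funext i
  congr 1
  have key : (∏ j : Fin (n+2), f (p j)) = f (p i) * ∏ j : Fin (n+1), f (p (i.succAbove j)) :=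
    Fin.prod_univ_succAbove (fun j => f (p j)) i
  have : (∏ j : Fin (n+1), f ((p ∘ i.succAbove) j)) = (f (p i))⁻¹ * ∏ j : Fin (n+2), f (p j) := by
    rw [key, inv_mul_cancel_left₀ (hf _)]
    rfl
  rw [this]
  rw [mul_inv]
  rw [inv_inv]
  ring

/-- the rescaling map maps `Iₙ(V)` isomorphically onto itself and
hence induces a chain isomorphism of the quotient complexes
`𝓡ₙ(V) = Λₙ(V)/Iₙ(V)` intertwining the unweighted regular boundary with the
`f`-weighted regular boundary. (The hypotheses record that both boundaries and
the rescaling map preserve `I_*(V)` and so descend to the quotients.) -/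
theorem stmt10 (V : Type) [Fintype V] (f : V → ℝ) (hf : ∀ v, f v ≠ 0)
    (hbd : ∀ n, Irr V (n + 1) ≤ (Irr V n).comap (pathBoundary V (fun _ => 1) n))
    (hbdf : ∀ n, Irr V (n + 1) ≤ (Irr V n).comap (pathBoundary V f n))
    (hres : ∀ n, Irr V n ≤ (Irr V n).comap (pathRescale V f n)) :
    (∀ n, Submodule.map (pathRescale V f n) (Irr V n) = Irr V n) ∧
    (∀ n, Function.Bijective
      (Submodule.mapQ (Irr V n) (Irr V n) (pathRescale V f n) (hres n))) ∧
    (∀ n, (Submodule.mapQ (Irr V n) (Irr V n) (pathRescale V f n)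
            (hres n)).comp
          (Submodule.mapQ (Irr V (n + 1)) (Irr V n)
            (pathBoundary V (fun _ => 1) n) (hbd n))
        = (Submodule.mapQ (Irr V (n + 1)) (Irr V n) (pathBoundary V f n)
            (hbdf n)).comp
          (Submodule.mapQ (Irr V (n + 1)) (Irr V (n + 1))
            (pathRescale V f (n + 1)) (hres (n + 1)))) := by
  set g : V → ℝ := fun v => (f v)⁻¹ with hg
  have hfg : ∀ v, (f v)⁻¹ * (g v)⁻¹ = 1 := by
    intro v; simp [hg, inv_mul_cancel₀ (hf v)]
  have hgf : ∀ v, (g v)⁻¹ * (f v)⁻¹ = 1 := by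
    intro v; rw [mul_comm]; exact hfg v
  have h1 : ∀ n, (pathRescale V g n).comp (pathRescale V f n) = LinearMap.id :=
    fun n => rescale_inv V f g hfg n
  have h2 : ∀ n, (pathRescale V f n).comp (pathRescale V g n) = LinearMap.id :=
    fun n => rescale_inv V g f hgf n
  refine ⟨?_, ?_, ?_⟩
  · intro n
    apply le_antisymm (map_le_iff_le_comap.mpr (hres n))
    intro x hx
    refine ⟨pathRescale V g n x, rescale_irr V g n hx, ?_⟩
    exact LinearMap.congr_fun (h2 n) x
  · intro n
    set F := Submodule.mapQ (Irr V n) (Irr V n) (pathRescale V f n) (hres n)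
    set G := Submodule.mapQ (Irr V n) (Irr V n) (pathRescale V g n) (rescale_irr V g n)
    have hGF : ∀ x, G (F x) = x := by
      intro x
      obtain ⟨y, rfl⟩ := Submodule.Quotient.mk_surjective _ x
      show Submodule.Quotient.mk (pathRescale V g n (pathRescale V f n y)) = _
      rw [← LinearMap.comp_apply, h1 n]; rfl
    have hFG : ∀ x, F (G x) = x := by
      intro x
      obtain ⟨y, rfl⟩ := Submodule.Quotient.mk_surjective _ x
      show Submodule.Quotient.mk (pathRescale V f n (pathRescale V g n y)) = _
      rw [← LinearMap.comp_apply, h2 n]; rfl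
    exact ⟨Function.LeftInverse.injective hGF, Function.RightInverse.surjective hFG⟩
  · intro n
    apply Submodule.linearMap_qext
    refine LinearMap.ext fun x => ?_
    simp only [LinearMap.comp_apply, Submodule.mkQ_apply, Submodule.mapQ_apply]
    rw [← LinearMap.comp_apply, ← LinearMap.comp_apply, chain_comm V f hf n]
end

section
/- Let $G = (V, E)$ be a finite digraph and $f : V \to \mathbb{R}^\times$ non-vanishing. The chain isomorphism $\varphi(v_0 \cdots v_n) = \frac{1}{f(v_0) \cdots f(v_n)} v_0 \cdots v_n$ on regular paths maps the $\partial$-invariant complex $\Omega_n(G) = \mathcal{A}_n(G) \cap \partial_n^{-1}(\mathcal{A}_{n-1}(G))$ isomorphically onto the $f$-weighted $\partial$-invariant complex $\Omega_n^{f}(G) = \mathcal{A}_n(G) \cap (\partial_n^f)^{-1}(\mathcal{A}_{n-1}(G))$ for every $n \geq 0$. -/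
open LinearMap Submodule

/-- The subspace `𝓐ₙ(G) ⊆ 𝓡ₙ(V) = Λₙ(V)/Iₙ(V)` spanned by the (classes of)
allowed elementary paths of the digraph `G = (V, E)`. -/
noncomputable def Allowed (V : Type) (E : V → V → Prop) (n : ℕ) :
    Submodule ℝ (((Fin (n + 1) → V) →₀ ℝ) ⧸ Irr V n) :=
  Submodule.span ℝ {x | ∃ p : Fin (n + 1) → V,
    (∀ i : Fin n, E (p i.castSucc) (p i.succ)) ∧
    x = Submodule.mkQ (Irr V n) (Finsupp.single p 1)}

/-- The `f`-weighted `∂`-invariant complex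
`Ωₙ^f(G) = 𝓐ₙ(G) ∩ (∂ₙ^f)⁻¹(𝓐ₙ₋₁(G))`, inside `𝓡ₙ(V)`. -/
noncomputable def Omega (V : Type) (E : V → V → Prop) (f : V → ℝ)
    (hbdf : ∀ n, Irr V (n + 1) ≤ (Irr V n).comap (pathBoundary V f n)) :
    ∀ n, Submodule ℝ (((Fin (n + 1) → V) →₀ ℝ) ⧸ Irr V n)
  | 0 => Allowed V E 0
  | (n + 1) => Allowed V E (n + 1) ⊓
      Submodule.comap
        (Submodule.mapQ (Irr V (n + 1)) (Irr V n) (pathBoundary V f n) (hbdf n))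
        (Allowed V E n)

lemma pathRescale_single (V : Type) (f : V → ℝ) (n : ℕ) (p : Fin (n+1) → V) :
    pathRescale V f n (Finsupp.single p 1) = (∏ i, f (p i))⁻¹ • Finsupp.single p 1 := by
  simp [pathRescale]

lemma pathBoundary_single (V : Type) (f : V → ℝ) (n : ℕ) (p : Fin (n+2) → V) :
    pathBoundary V f n (Finsupp.single p 1) =
      ∑ i : Fin (n+2), ((-1:ℝ)^(i:ℕ) * f (p i)) • Finsupp.single (p ∘ i.succAbove) 1 := by
  simp [pathBoundary]

lemma single_eq_smul (V : Type) (n : ℕ) (p : Fin (n+1) → V) (r : ℝ) :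
    Finsupp.single p r = r • Finsupp.single p (1:ℝ) := by
  rw [Finsupp.smul_single, smul_eq_mul, mul_one]

lemma rescale_comp (V : Type) (f : V → ℝ) (hf : ∀ v, f v ≠ 0) (n : ℕ) :
    (pathRescale V f n).comp (pathRescale V (fun v => (f v)⁻¹) n) = LinearMap.id := by
  apply Finsupp.lhom_ext
  intro p r
  have h : (∏ i, f (p i)) ≠ 0 := Finset.prod_ne_zero_iff.2 fun i _ => hf _
  rw [single_eq_smul]
  simp only [LinearMap.comp_apply, map_smul, LinearMap.id_apply, pathRescale_single,
    smul_smul, Finset.prod_inv_distrib, inv_inv]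
  rw [mul_inv_cancel₀ h, mul_one]

lemma boundary_rescale_comm (V : Type) (f : V → ℝ) (hf : ∀ v, f v ≠ 0) (n : ℕ) :
    (pathBoundary V f n).comp (pathRescale V f (n+1)) =
      (pathRescale V f n).comp (pathBoundary V (fun _ => 1) n) := by
  apply Finsupp.lhom_ext
  intro p r
  rw [single_eq_smul, map_smul, map_smul]
  congr 1
  simp only [LinearMap.comp_apply, pathRescale_single, map_smul, pathBoundary_single,
    mul_one, map_sum, Finset.smul_sum]
  refine Finset.sum_congr rfl fun i _ => ?_
  simp only [smul_smul]
  congr 1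
  have hprod : ∏ j : Fin (n+2), f (p j) = f (p i) * ∏ j : Fin (n+1), f ((p ∘ i.succAbove) j) :=
    Fin.prod_univ_succAbove (fun j => f (p j)) i
  have h1 : (∏ j : Fin (n+1), f ((p ∘ i.succAbove) j)) ≠ 0 :=
    Finset.prod_ne_zero_iff.2 fun j _ => hf _
  rw [hprod]
  have h2 : f (p i) ≠ 0 := hf _
  field_simp

lemma rescale_comp' (V : Type) (f : V → ℝ) (hf : ∀ v, f v ≠ 0) (n : ℕ) :
    (pathRescale V (fun v => (f v)⁻¹) n).comp (pathRescale V f n) = LinearMap.id := by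
  have := rescale_comp V (fun v => (f v)⁻¹) (fun v => inv_ne_zero (hf v)) n
  simpa only [inv_inv] using this

lemma allowed_map (V : Type) (E : V → V → Prop) (f : V → ℝ) (hf : ∀ v, f v ≠ 0) (n : ℕ)
    (h : Irr V n ≤ (Irr V n).comap (pathRescale V f n)) :
    Submodule.map (Submodule.mapQ (Irr V n) (Irr V n) (pathRescale V f n) h)
      (Allowed V E n) = Allowed V E n := by
  apply le_antisymm
  · rw [Allowed, Submodule.map_span, Submodule.span_le]
    rintro x ⟨y, ⟨p, hp, rfl⟩, rfl⟩
    rw [SetLike.mem_coe, Submodule.mkQ_apply, Submodule.mapQ_apply, pathRescale_single,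
      Submodule.Quotient.mk_smul]
    exact Submodule.smul_mem _ _ (Submodule.subset_span ⟨p, hp, by rw [Submodule.mkQ_apply]⟩)
  · have : Allowed V E n ≤ Submodule.span ℝ
        ((Submodule.mapQ (Irr V n) (Irr V n) (pathRescale V f n) h) ''
          {x | ∃ p : Fin (n + 1) → V,
            (∀ i : Fin n, E (p i.castSucc) (p i.succ)) ∧
            x = Submodule.mkQ (Irr V n) (Finsupp.single p 1)}) := by
      rw [Allowed, Submodule.span_le]
      rintro x ⟨p, hp, rfl⟩
      have hc : (∏ i, f (p i)) ≠ 0 := Finset.prod_ne_zero_iff.2 fun i _ => hf _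
      have : Submodule.mkQ (Irr V n) (Finsupp.single p 1) = (∏ i, f (p i)) •
          (Submodule.mapQ (Irr V n) (Irr V n) (pathRescale V f n) h)
            (Submodule.mkQ (Irr V n) (Finsupp.single p 1)) := by
        rw [Submodule.mkQ_apply, Submodule.mapQ_apply, pathRescale_single, Submodule.Quotient.mk_smul,
          smul_smul, mul_inv_cancel₀ hc, one_smul]
      rw [this]
      exact Submodule.smul_mem _ _ (Submodule.subset_span ⟨_, ⟨p, hp, rfl⟩, rfl⟩)
    rw [← Submodule.map_span] at this
    exact this.trans (Submodule.map_mono (by rw [Allowed]))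

lemma mapQ_bij (V : Type) (f : V → ℝ) (hf : ∀ v, f v ≠ 0) (n : ℕ)
    (h : Irr V n ≤ (Irr V n).comap (pathRescale V f n)) :
    Function.Bijective (Submodule.mapQ (Irr V n) (Irr V n) (pathRescale V f n) h) := by
  set ψ := Submodule.mapQ (Irr V n) (Irr V n) (pathRescale V (fun v => (f v)⁻¹) n)
      (rescale_irr V _ n) with hψ
  have h1 : (Submodule.mapQ (Irr V n) (Irr V n) (pathRescale V f n) h).comp ψ
      = LinearMap.id := by
    refine Submodule.linearMap_qext _ ?_
    ext x
    simp only [LinearMap.comp_apply, Submodule.mkQ_apply, Submodule.mapQ_apply, hψ,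
      LinearMap.id_apply]
    rw [← LinearMap.comp_apply, rescale_comp V f hf n, LinearMap.id_apply]
  have h2 : ψ.comp (Submodule.mapQ (Irr V n) (Irr V n) (pathRescale V f n) h)
      = LinearMap.id := by
    refine Submodule.linearMap_qext _ ?_
    ext x
    simp only [LinearMap.comp_apply, Submodule.mkQ_apply, Submodule.mapQ_apply, hψ,
      LinearMap.id_apply]
    rw [← LinearMap.comp_apply, rescale_comp' V f hf n, LinearMap.id_apply]
  exact Function.bijective_iff_has_inverse.2
    ⟨ψ, fun x => LinearMap.congr_fun h2 x, fun x => LinearMap.congr_fun h1 x⟩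

lemma comm_q (V : Type) (f : V → ℝ) (hf : ∀ v, f v ≠ 0) (n : ℕ)
    (hbd : Irr V (n + 1) ≤ (Irr V n).comap (pathBoundary V (fun _ => 1) n))
    (hbdf : Irr V (n + 1) ≤ (Irr V n).comap (pathBoundary V f n))
    (hr1 : Irr V (n + 1) ≤ (Irr V (n + 1)).comap (pathRescale V f (n + 1)))
    (hr0 : Irr V n ≤ (Irr V n).comap (pathRescale V f n)) :
    (Submodule.mapQ (Irr V (n+1)) (Irr V n) (pathBoundary V f n) hbdf).comp
        (Submodule.mapQ (Irr V (n+1)) (Irr V (n+1)) (pathRescale V f (n+1)) hr1)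
      = (Submodule.mapQ (Irr V n) (Irr V n) (pathRescale V f n) hr0).comp
        (Submodule.mapQ (Irr V (n+1)) (Irr V n) (pathBoundary V (fun _ => 1) n) hbd) := by
  refine Submodule.linearMap_qext _ ?_
  ext x
  simp only [LinearMap.comp_apply, Submodule.mkQ_apply, Submodule.mapQ_apply]
  rw [← LinearMap.comp_apply, ← LinearMap.comp_apply, boundary_rescale_comm V f hf n]
  rfl

/-- the rescaling chain isomorphism of `𝓡_*(V)` maps `Ωₙ(G)`
isomorphically onto `Ωₙ^f(G)` for every `n ≥ 0`. -/
theorem stmt11 (V : Type) [Fintype V] (E : V → V → Prop)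
    (hE : ∀ u v, E u v → u ≠ v) (f : V → ℝ) (hf : ∀ v, f v ≠ 0)
    (hbd : ∀ n, Irr V (n + 1) ≤ (Irr V n).comap (pathBoundary V (fun _ => 1) n))
    (hbdf : ∀ n, Irr V (n + 1) ≤ (Irr V n).comap (pathBoundary V f n))
    (hres : ∀ n, Irr V n ≤ (Irr V n).comap (pathRescale V f n)) :
    ∀ n, Function.Bijective
        (Submodule.mapQ (Irr V n) (Irr V n) (pathRescale V f n) (hres n)) ∧
      Submodule.map
          (Submodule.mapQ (Irr V n) (Irr V n) (pathRescale V f n) (hres n))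
          (Omega V E (fun _ => 1) hbd n)
        = Omega V E f hbdf n := by
  have hbij : ∀ n, Function.Bijective
      (Submodule.mapQ (Irr V n) (Irr V n) (pathRescale V f n) (hres n)) :=
    fun n => mapQ_bij V f hf n (hres n)
  intro n
  refine ⟨hbij n, ?_⟩
  cases n with
  | zero => simpa only [Omega] using allowed_map V E f hf 0 (hres 0)
  | succ n =>
    simp only [Omega]
    rw [Submodule.map_inf _ (hbij (n+1)).injective,
      allowed_map V E f hf (n+1) (hres (n+1))]
    congr 1
    have hcA : Submodule.comap
        (Submodule.mapQ (Irr V n) (Irr V n) (pathRescale V f n) (hres n))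
        (Allowed V E n) = Allowed V E n := by
      conv_lhs => rw [← allowed_map V E f hf n (hres n)]
      exact Submodule.comap_map_eq_of_injective (hbij n).injective _
    have key : Submodule.comap
        (Submodule.mapQ (Irr V (n+1)) (Irr V (n+1)) (pathRescale V f (n+1)) (hres (n+1)))
        (Submodule.comap
          (Submodule.mapQ (Irr V (n+1)) (Irr V n) (pathBoundary V f n) (hbdf n))
          (Allowed V E n))
        = Submodule.comap
          (Submodule.mapQ (Irr V (n+1)) (Irr V n) (pathBoundary V (fun _ => 1) n) (hbd n))
          (Allowed V E n) := by
      rw [← Submodule.comap_comp, comm_q V f hf n (hbd n) (hbdf n) (hres (n+1)) (hres n),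
        Submodule.comap_comp, hcA]
    rw [← key, Submodule.map_comap_eq_of_surjective (hbij (n+1)).surjective]
end

section
/- Let $G$ be the triangle digraph with vertices $\{0, 1, 2\}$ and edges $\{(0,1), (1,2), (0,2)\}$, and let $f, g : \{0,1,2\} \to \mathbb{R}^\times$ be non-vanishing functions. Then the $(f,g)$-weighted R-torsion of $G$ equals $T(G, f, g) = \left( \sum_{i=0}^2 \frac{f(i)^2}{g(i)^2} \right)^{1/2}$. In particular, $T(G, f, f) = \sqrt{3}$ for every non-vanishing $f$. -/
open LinearMap Module
open scoped Matrix

/-- The Hodge-Laplace operator `Δₙ = ∂ₙ* ∂ₙ + ∂ₙ₊₁ ∂ₙ₊₁*`. -/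
noncomputable def hodgeLaplace (C : ℕ → Type) [∀ n, NormedAddCommGroup (C n)]
    [∀ n, InnerProductSpace ℝ (C n)] [∀ n, FiniteDimensional ℝ (C n)]
    (d : ∀ n, C n →ₗ[ℝ] C (n - 1)) (n : ℕ) : C n →ₗ[ℝ] C n :=
  (adjoint (d n)).comp (d n) +
    (show C n →ₗ[ℝ] C n from (d (n + 1)).comp (adjoint (d (n + 1))))

/-- The product of the positive eigenvalues (with multiplicity) of a
self-adjoint positive semi-definite operator `T`, computed as
`det(T + P_{ker T})` where `P_{ker T}` is the orthogonal projection onto the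
kernel; this is the regularized determinant `exp(-ζ_T'(0))`. -/
noncomputable def detPos {E : Type} [NormedAddCommGroup E]
    [InnerProductSpace ℝ E] [FiniteDimensional ℝ E] (T : E →ₗ[ℝ] E) : ℝ :=
  LinearMap.det (T + ((LinearMap.ker T).subtypeL.comp
    ((LinearMap.ker T).orthogonalProjectionOnto)).toLinearMap)

/-- The analytic torsion of a chain complex of finite-dimensional real inner
product spaces vanishing above degree `N`:
`log T = (1/2) ∑ (-1)^n n ζₙ'(0) = -(1/2) ∑ (-1)^n n ∑_{λ>0} log λ`, i.e.
`T = ∏ₙ (det'Δₙ)^{(-1)^{n+1} n / 2}`. -/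
noncomputable def torsion (C : ℕ → Type) [∀ n, NormedAddCommGroup (C n)]
    [∀ n, InnerProductSpace ℝ (C n)] [∀ n, FiniteDimensional ℝ (C n)]
    (d : ∀ n, C n →ₗ[ℝ] C (n - 1)) (N : ℕ) : ℝ :=
  ∏ n ∈ Finset.range (N + 1),
    detPos (hodgeLaplace C d n) ^ (((-1 : ℝ) ^ (n + 1) * n) / 2)

/-- Dimensions of the `(f,g)`-weighted `∂`-invariant complex of the triangle
digraph `0 → 1 → 2`, `0 → 2`: `Ω₀ = ⟨e₀,e₁,e₂⟩`, `Ω₁ = ⟨e₀₁,e₁₂,e₀₂⟩`,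
`Ω₂ = ⟨e₀₁₂⟩`, `Ωₙ = 0` for `n ≥ 3`. -/
def triDims : ℕ → ℕ
  | 0 => 3
  | 1 => 3
  | 2 => 1
  | _ => 0

/-- The `(f,g)`-weighted boundary operators of the triangle digraph, written in
the `ι_g`-orthonormal bases `e_{v₀⋯vₙ}/(g(v₀)⋯g(vₙ))` (basis order
`e₀,e₁,e₂`; `e₀₁,e₁₂,e₀₂`; `e₀₁₂`), where `∂^f` deletes the `i`-th vertex with
factor `(-1)^i f(vᵢ)`. -/
noncomputable def triBoundary (f g : Fin 3 → ℝ) :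
    ∀ n, EuclideanSpace ℝ (Fin (triDims n)) →ₗ[ℝ]
      EuclideanSpace ℝ (Fin (triDims (n - 1)))
  | 0 => 0
  | 1 => Matrix.toEuclideanLin
      !![-(f 1 / g 1), 0, -(f 2 / g 2);
         f 0 / g 0, -(f 2 / g 2), 0;
         0, f 1 / g 1, f 0 / g 0]
  | 2 => Matrix.toEuclideanLin !![f 2 / g 2; f 0 / g 0; -(f 1 / g 1)]
  | (_ + 3) => 0

lemma detPos_of_ker_eq_bot {E : Type} [NormedAddCommGroup E]
    [InnerProductSpace ℝ E] [FiniteDimensional ℝ E] (T : E →ₗ[ℝ] E)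
    (h : LinearMap.ker T = ⊥) : detPos T = LinearMap.det T := by
  have hz : (((LinearMap.ker T).subtypeL.comp
      ((LinearMap.ker T).orthogonalProjectionOnto)).toLinearMap : E →ₗ[ℝ] E) = 0 := by
    ext x
    have hm : (((LinearMap.ker T).orthogonalProjectionOnto x : LinearMap.ker T) : E) = 0 :=
      Submodule.eq_bot_iff _ |>.mp h _ ((LinearMap.ker T).orthogonalProjectionOnto x).2
    simpa using hm
  unfold detPos
  rw [hz, add_zero]

lemma euc_comp {l m n : ℕ} (A : Matrix (Fin l) (Fin m) ℝ) (B : Matrix (Fin m) (Fin n) ℝ) :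
    (Matrix.toEuclideanLin A).comp (Matrix.toEuclideanLin B) = Matrix.toEuclideanLin (A * B) := by
  simp only [Matrix.toEuclideanLin_eq_toLin]
  rw [Matrix.toLin_mul (PiLp.basisFun 2 ℝ (Fin n))
    (PiLp.basisFun 2 ℝ (Fin m)) (PiLp.basisFun 2 ℝ (Fin l))]

lemma euc_smul_one_ker {n : ℕ} (s : ℝ) (hs : s ≠ 0) :
    LinearMap.ker (Matrix.toEuclideanLin (s • (1 : Matrix (Fin n) (Fin n) ℝ))) = ⊥ := by
  rw [Matrix.toEuclideanLin_eq_toLin, map_smul, Matrix.toLin_one,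
    LinearMap.ker_smul _ _ hs, LinearMap.ker_id]

lemma euc_smul_one_det {n : ℕ} (s : ℝ) :
    LinearMap.det (Matrix.toEuclideanLin (s • (1 : Matrix (Fin n) (Fin n) ℝ))) = s ^ n := by
  rw [Matrix.toEuclideanLin_eq_toLin, map_smul, Matrix.toLin_one,
    LinearMap.det_smul, LinearMap.det_id, mul_one]
  simp [finrank_euclideanSpace]

lemma euc_smul_one_detPos {n : ℕ} (s : ℝ) (hs : s ≠ 0) :
    detPos (Matrix.toEuclideanLin (s • (1 : Matrix (Fin n) (Fin n) ℝ))) = s ^ n := by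
  rw [detPos_of_ker_eq_bot _ (euc_smul_one_ker s hs), euc_smul_one_det]

lemma tri_main (f g : Fin 3 → ℝ) (hf : ∀ v, f v ≠ 0) (hg : ∀ v, g v ≠ 0) :
    torsion (fun n => EuclideanSpace ℝ (Fin (triDims n))) (triBoundary f g) 2
      = Real.sqrt (∑ i, f i ^ 2 / g i ^ 2) := by
  set s : ℝ := (f 0 / g 0) ^ 2 + (f 1 / g 1) ^ 2 + (f 2 / g 2) ^ 2 with hs_def
  have hs : 0 < s := by
    have h0 : f 0 / g 0 ≠ 0 := div_ne_zero (hf 0) (hg 0)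
    positivity
  set C : ℕ → Type := fun n => EuclideanSpace ℝ (Fin (triDims n)) with hC
  set d := triBoundary f g with hd
  set D1 : Matrix (Fin 3) (Fin 3) ℝ :=
    !![-(f 1 / g 1), 0, -(f 2 / g 2);
       f 0 / g 0, -(f 2 / g 2), 0;
       0, f 1 / g 1, f 0 / g 0] with hD1
  set D2 : Matrix (Fin 3) (Fin 1) ℝ := !![f 2 / g 2; f 0 / g 0; -(f 1 / g 1)] with hD2
  have hadj1 : adjoint (d 1) = Matrix.toEuclideanLin D1ᴴ :=
    (Matrix.toEuclideanLin_conjTranspose_eq_adjoint D1).symm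
  have hadj2 : adjoint (d 2) = Matrix.toEuclideanLin D2ᴴ :=
    (Matrix.toEuclideanLin_conjTranspose_eq_adjoint D2).symm
  have hΔ1 : hodgeLaplace C d 1 = Matrix.toEuclideanLin (s • (1 : Matrix (Fin 3) (Fin 3) ℝ)) := by
    have he : hodgeLaplace C d 1
        = (adjoint (d 1)).comp (d 1) + (d 2).comp (adjoint (d 2)) := rfl
    rw [he, hadj1, hadj2]
    have hd1 : d 1 = Matrix.toEuclideanLin D1 := rfl
    have hd2 : d 2 = Matrix.toEuclideanLin D2 := rfl
    rw [hd1, hd2]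
    show (Matrix.toEuclideanLin D1ᴴ).comp (Matrix.toEuclideanLin D1)
      + (Matrix.toEuclideanLin D2).comp (Matrix.toEuclideanLin D2ᴴ) = _
    rw [euc_comp, euc_comp]
    have hM : D1ᴴ * D1 + D2 * D2ᴴ = s • (1 : Matrix (Fin 3) (Fin 3) ℝ) := by
      ext i j
      fin_cases i <;> fin_cases j <;>
        · simp [hD1, hD2, Matrix.mul_apply, Fin.sum_univ_three, Matrix.conjTranspose_apply,
            Matrix.one_apply, Fin.sum_univ_one, Matrix.vecHead, Matrix.vecTail, hs_def,
            Matrix.vecMul, dotProduct]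
          ring
    rw [← hM]
    exact (LinearEquiv.map_add Matrix.toEuclideanLin _ _).symm
  have hΔ2 : hodgeLaplace C d 2 = Matrix.toEuclideanLin (s • (1 : Matrix (Fin 1) (Fin 1) ℝ)) := by
    have he : hodgeLaplace C d 2
        = (adjoint (d 2)).comp (d 2) + (d 3).comp (adjoint (d 3)) := rfl
    have hd3 : d 3 = 0 := rfl
    rw [he, hd3, zero_comp, add_zero, hadj2]
    have hd2 : d 2 = Matrix.toEuclideanLin D2 := rfl
    rw [hd2]
    show (Matrix.toEuclideanLin D2ᴴ).comp (Matrix.toEuclideanLin D2) = _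
    rw [euc_comp]
    congr 1
    ext i j
    fin_cases i <;> fin_cases j <;>
      · simp [hD2, Matrix.mul_apply, Fin.sum_univ_three, Matrix.conjTranspose_apply,
          Matrix.one_apply, Matrix.vecHead, Matrix.vecTail, hs_def]
        ring
  have hdp1 : detPos (hodgeLaplace C d 1) = s ^ 3 := by
    rw [hΔ1]; exact euc_smul_one_detPos s hs.ne'
  have hdp2 : detPos (hodgeLaplace C d 2) = s := by
    rw [hΔ2]
    have := euc_smul_one_detPos (n := 1) s hs.ne'
    rw [pow_one] at this
    exact this
  have hsum : Real.sqrt (∑ i, f i ^ 2 / g i ^ 2) = Real.sqrt s := by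
    simp only [Fin.sum_univ_three, hs_def, div_pow]
  rw [hsum]
  unfold torsion
  rw [Finset.prod_range_succ, Finset.prod_range_succ, Finset.prod_range_one, hdp1, hdp2]
  have e0 : (((-1 : ℝ) ^ (0 + 1) * (0 : ℕ)) / 2) = 0 := by norm_num
  have e1 : (((-1 : ℝ) ^ (1 + 1) * (1 : ℕ)) / 2) = 1 / 2 := by norm_num
  have e2 : (((-1 : ℝ) ^ (2 + 1) * (2 : ℕ)) / 2) = -1 := by norm_num
  rw [e0, e1, e2, Real.rpow_zero, one_mul]
  rw [← Real.rpow_natCast s 3, ← Real.rpow_mul hs.le, ← Real.rpow_add hs]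
  rw [Real.sqrt_eq_rpow]
  norm_num

/-- the `(f,g)`-weighted torsion of the triangle digraph equals
`√(∑ᵢ f(i)²/g(i)²)`; in particular the `(f,f)`-weighted torsion is `√3`. -/
theorem stmt16 (f g : Fin 3 → ℝ) (hf : ∀ v, f v ≠ 0) (hg : ∀ v, g v ≠ 0) :
    torsion (fun n => EuclideanSpace ℝ (Fin (triDims n))) (triBoundary f g) 2
      = Real.sqrt (∑ i, f i ^ 2 / g i ^ 2) ∧
    torsion (fun n => EuclideanSpace ℝ (Fin (triDims n))) (triBoundary f f) 2
      = Real.sqrt 3 := by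
  refine ⟨tri_main f g hf hg, ?_⟩
  rw [tri_main f f hf hf]
  congr 1
  rw [Fin.sum_univ_three]
  have h0 := hf 0; have h1 := hf 1; have h2 := hf 2
  field_simp
  norm_num
end
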